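/- arXiv:1206.0251 — 4 statements merged into one kernel-verified Lean document; each statement's English description precedes it below -/
import Mathlib

section
/- Let ℓ ≥ 1 be an integer, a > 0 real, and x ∈ ℝ. Then (1/(2πi)) ∫ over the line Re(ω)=a of e^{xω} ω^{-(ℓ+1)} dω equals x^ℓ/ℓ! if x > 0, and equals 0 if x ≤ 0. -/
open Complex Real MeasureTheory
open Set Filter Topology FourierTransform


lemma aux_norm (n : ℕ) (c : ℂ) {t : ℝ} (ht : 0 < t) :
    ‖(t:ℂ)^n * Complex.exp (-(c * t))‖ = t ^ n * Real.exp (-(c.re * t)) := by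
  rw [norm_mul, Complex.norm_exp, norm_pow,
    Complex.norm_real, Real.norm_eq_abs, abs_of_pos ht]
  simp

lemma aux_integrableOn (n : ℕ) {c : ℂ} (hc : 0 < c.re) :
    IntegrableOn (fun t : ℝ ↦ (t:ℂ)^n * Complex.exp (-(c * t))) (Ioi 0) := by
  have hg : IntegrableOn (fun t : ℝ ↦ t ^ (n:ℝ) * Real.exp (-c.re * t ^ (1:ℝ))) (Ioi 0) :=
    integrableOn_rpow_mul_exp_neg_mul_rpow (by exact_mod_cast neg_one_lt_zero.trans_le (Nat.cast_nonneg n)) zero_lt_one hc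
  refine Integrable.mono' hg ?_ ?_
  · exact (Continuous.mul (by continuity) (by continuity)).aestronglyMeasurable
  · filter_upwards [ae_restrict_mem measurableSet_Ioi] with t ht
    rw [aux_norm n c ht]
    simp only [Real.rpow_one, Real.rpow_natCast, neg_mul]
    exact le_refl _

lemma aux_tendsto_real (n : ℕ) {b : ℝ} (hb : 0 < b) :
    Tendsto (fun t : ℝ ↦ t ^ n * Real.exp (-(b * t))) atTop (nhds 0) := by
  have h1 : Tendsto (fun t : ℝ ↦ b * t) atTop atTop :=
    tendsto_id.const_mul_atTop hb
  have h2 := (Real.tendsto_pow_mul_exp_neg_atTop_nhds_zero n).comp h1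
  have h3 := h2.const_mul (1 / b ^ n)
  rw [mul_zero] at h3
  refine h3.congr fun t ↦ ?_
  simp only [Function.comp_apply]
  field_simp [mul_pow]
  ring

lemma aux_tendsto_top (n : ℕ) {c : ℂ} (hc : 0 < c.re) :
    Tendsto (fun t : ℝ ↦ (t:ℂ)^n * Complex.exp (-(c * t))) atTop (nhds 0) := by
  rw [tendsto_zero_iff_norm_tendsto_zero]
  have : ∀ᶠ t : ℝ in atTop, t ^ n * Real.exp (-(c.re * t)) = ‖(t:ℂ)^n * Complex.exp (-(c * t))‖ := by
    filter_upwards [eventually_gt_atTop (0:ℝ)] with t ht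
    exact (aux_norm n c ht).symm
  exact (aux_tendsto_real n hc).congr' this

lemma aux_hasDerivAt_exp {c : ℂ} (hc : c ≠ 0) (t : ℝ) :
    HasDerivAt (fun s : ℝ ↦ -Complex.exp (-(c * s)) / c) (Complex.exp (-(c * t))) t := by
  have h1 : HasDerivAt (fun z : ℂ ↦ -(c * z)) (-c) (t:ℂ) := by
    simpa using ((hasDerivAt_id (t:ℂ)).const_mul c).fun_neg
  have h2 := h1.cexp
  have h3 := (h2.div_const c).fun_neg
  have h4 := h3.comp_ofReal
  convert h4 using 1
  · funext s; rw [neg_div]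
  · field_simp
lemma aux_integral (n : ℕ) : ∀ {c : ℂ}, 0 < c.re →
    ∫ t in Ioi (0:ℝ), (t:ℂ)^n * Complex.exp (-(c * t)) = n.factorial / c ^ (n+1) := by
  induction n with
  | zero =>
    intro c hc
    have hne : c ≠ 0 := fun h ↦ by simp [h] at hc
    have h := integral_Ioi_of_hasDerivAt_of_tendsto' (a := 0)
      (f := fun s : ℝ ↦ -Complex.exp (-(c * s)) / c)
      (fun t _ ↦ aux_hasDerivAt_exp hne t)
      (by simpa using aux_integrableOn 0 hc)
      (m := 0) ?_
    · simpa [neg_div, one_div] using h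
    · have := (aux_tendsto_top 0 hc)
      simp only [pow_zero, one_mul] at this
      have := (this.neg).div_const c
      simpa using this
  | succ n ih =>
    intro c hc
    have hne : c ≠ 0 := fun h ↦ by simp [h] at hc
    have key := integral_Ioi_mul_deriv_eq_deriv_mul (a := 0)
      (u := fun t : ℝ ↦ (t:ℂ)^(n+1)) (u' := fun t : ℝ ↦ ((n:ℂ)+1) * (t:ℂ)^n)
      (v := fun s : ℝ ↦ -Complex.exp (-(c * s)) / c)
      (v' := fun t : ℝ ↦ Complex.exp (-(c * t)))
      (fun t _ ↦ by
        have := (hasDerivAt_pow (n+1) ((t:ℂ))).comp_ofReal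
        simpa using this)
      (fun t _ ↦ aux_hasDerivAt_exp hne t)
      (a' := 0) (b' := 0) ?_ ?_ ?_ ?_
    · have h2 : (∫ x in Ioi (0:ℝ), ((n:ℂ)+1) * (x:ℂ)^n * (-Complex.exp (-(c*x))/c))
          = (-((n:ℂ)+1)/c) * ((n.factorial : ℂ) / c^(n+1)) := by
        rw [← ih hc, ← MeasureTheory.integral_const_mul]
        apply setIntegral_congr_fun measurableSet_Ioi
        intro t _
        field_simp
      rw [key, h2]
      rw [pow_succ]
      push_cast [Nat.factorial_succ]
      field_simp
      ring
    · exact aux_integrableOn (n+1) hc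
    · have h3 := ((aux_integrableOn n hc).const_mul (-((n:ℂ)+1)/c))
      refine h3.congr ?_
      filter_upwards with t
      simp only [Pi.mul_apply]
      field_simp
    · have hcont : ContinuousWithinAt (fun t : ℝ ↦ (t:ℂ)^(n+1) * (-Complex.exp (-(c * t)) / c))
          (Ioi 0) 0 := by
        apply Continuous.continuousWithinAt
        continuity
      simpa [Pi.mul_def, ContinuousWithinAt] using hcont
    · have h := aux_tendsto_top (n+1) hc
      have h5 := (h.neg).div_const c
      simp only [neg_zero, zero_div] at h5
      refine h5.congr fun t ↦ ?_
      simp only [Pi.mul_def]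
      field_simp

open FourierTransform

lemma aux_c_re (a : ℝ) (y : ℝ) : ((a:ℂ) + (y:ℝ) * Complex.I).re = a := by simp

lemma aux_c_ne {a : ℝ} (ha : 0 < a) (y : ℝ) : ((a:ℂ) + (y:ℝ) * Complex.I) ≠ 0 := by
  intro h
  have := congrArg Complex.re h
  simp at this
  exact ha.ne' this

lemma aux_fourier (ℓ : ℕ) {a : ℝ} (ha : 0 < a) (ξ : ℝ) :
    𝓕 (Set.indicator (Ioi 0) (fun u : ℝ ↦ (u:ℂ)^ℓ * Complex.exp (-(a * u)))) ξ
      = (ℓ.factorial : ℂ) / ((a:ℂ) + ((2 * π * ξ : ℝ) : ℂ) * Complex.I) ^ (ℓ+1) := by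
  set c : ℂ := (a:ℂ) + ((2 * π * ξ : ℝ):ℂ) * Complex.I with hc
  have hcre : 0 < c.re := by simpa [hc] using ha
  rw [Real.fourier_real_eq_integral_exp_smul]
  have heq : ∀ v : ℝ, Complex.exp (((-2 * π * v * ξ : ℝ):ℂ) * Complex.I) •
      (Set.indicator (Ioi 0) (fun u : ℝ ↦ (u:ℂ)^ℓ * Complex.exp (-(a * u))) v)
      = Set.indicator (Ioi 0) (fun u : ℝ ↦ (u:ℂ)^ℓ * Complex.exp (-(c * u))) v := by
    intro v
    by_cases hv : v ∈ Ioi (0:ℝ)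
    · rw [Set.indicator_of_mem hv, Set.indicator_of_mem hv, smul_eq_mul, hc, ← mul_assoc,
        mul_comm _ ((v:ℂ)^ℓ), mul_assoc, ← Complex.exp_add]
      congr 1
      push_cast
      ring
    · rw [Set.indicator_of_notMem hv, Set.indicator_of_notMem hv, smul_zero]
  rw [integral_congr_ae (Filter.Eventually.of_forall heq), integral_indicator measurableSet_Ioi,
    aux_integral ℓ hcre]

lemma aux_cont {ℓ : ℕ} (hl : 1 ≤ ℓ) (a : ℝ) :
    Continuous (Set.indicator (Ioi 0) (fun u : ℝ ↦ (u:ℂ)^ℓ * Complex.exp (-(a * u)))) := by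
  have hrw : Set.indicator (Ioi 0) (fun u : ℝ ↦ (u:ℂ)^ℓ * Complex.exp (-(a * u)))
      = fun u : ℝ ↦ (u:ℂ)^(ℓ-1) * ((max u 0 : ℝ):ℂ) * Complex.exp (-(a * u)) := by
    funext u
    by_cases hu : u ∈ Ioi (0:ℝ)
    · rw [Set.indicator_of_mem hu]
      have hu' : (0:ℝ) ≤ u := le_of_lt hu
      rw [max_eq_left hu']
      rw [show (u:ℂ)^(ℓ-1) * (u:ℂ) = (u:ℂ)^(ℓ-1+1) from (pow_succ _ _).symm,
        Nat.sub_add_cancel hl]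
    · rw [Set.indicator_of_notMem hu]
      have : max u 0 = 0 := max_eq_right (by simpa using hu)
      rw [this]
      simp
  rw [hrw]
  fun_prop

lemma aux_int_Ff {ℓ : ℕ} (hl : 1 ≤ ℓ) {a : ℝ} (ha : 0 < a) :
    Integrable (𝓕 (Set.indicator (Ioi 0) (fun u : ℝ ↦ (u:ℂ)^ℓ * Complex.exp (-(a * u))))) := by
  have hF : 𝓕 (Set.indicator (Ioi 0) (fun u : ℝ ↦ (u:ℂ)^ℓ * Complex.exp (-(a * u))))
      = fun ξ : ℝ ↦ (ℓ.factorial : ℂ) / ((a:ℂ) + ((2 * π * ξ : ℝ):ℂ) * Complex.I) ^ (ℓ+1) :=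
    funext (aux_fourier ℓ ha)
  rw [hF]
  set K : ℝ := min (a^2) ((2*π)^2) with hK
  have hKpos : 0 < K := lt_min (by positivity) (by positivity)
  set C : ℝ := ℓ.factorial / (a^(ℓ-1) * K) with hC
  have hbound : Integrable (fun ξ : ℝ ↦ C * (1 + ξ^2)⁻¹) := integrable_inv_one_add_sq.const_mul C
  refine hbound.mono' ?_ ?_
  · apply Continuous.aestronglyMeasurable
    apply Continuous.div continuous_const
    · fun_prop
    · intro ξ
      exact pow_ne_zero _ (aux_c_ne ha _)
  · refine Filter.Eventually.of_forall fun ξ ↦ ?_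
    set c : ℂ := (a:ℂ) + ((2 * π * ξ : ℝ):ℂ) * Complex.I with hc
    have habs : a ≤ ‖c‖ := by
      have := Complex.abs_re_le_norm c
      rwa [aux_c_re, abs_of_pos ha] at this
    have habs0 : 0 < ‖c‖ := lt_of_lt_of_le ha habs
    have hsq : (‖c‖)^2 = a^2 + (2*π*ξ)^2 := by
      rw [Complex.sq_norm, Complex.normSq_apply]
      simp [hc]
      ring
    have hsq_ge : K * (1 + ξ^2) ≤ (‖c‖)^2 := by
      rw [hsq, mul_add, mul_one]
      have h1 : K ≤ a^2 := min_le_left _ _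
      have h2 : K * ξ^2 ≤ (2*π*ξ)^2 := by
        have : (2*π*ξ)^2 = (2*π)^2 * ξ^2 := by ring
        rw [this]
        exact mul_le_mul_of_nonneg_right (min_le_right _ _) (sq_nonneg _)
      linarith
    have hpow : a^(ℓ-1) * (K * (1 + ξ^2)) ≤ (‖c‖)^(ℓ+1) := by
      have : (‖c‖)^(ℓ+1) = (‖c‖)^(ℓ-1) * (‖c‖)^2 := by
        rw [← pow_add]
        congr 1
        omega
      rw [this]
      apply mul_le_mul (pow_le_pow_left₀ ha.le habs _) hsq_ge (by positivity) (by positivity)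
    rw [norm_div, norm_pow, Complex.norm_natCast]
    rw [div_le_iff₀ (by positivity)]
    have h1ξ : (0:ℝ) < 1 + ξ^2 := by positivity
    rw [hC]
    rw [div_mul_eq_mul_div, div_mul_eq_mul_div, le_div_iff₀ (by positivity)]
    calc (ℓ.factorial : ℝ) * (a^(ℓ-1) * K) = ℓ.factorial * (a ^ (ℓ - 1) * (K * (1 + ξ ^ 2))) * (1 + ξ^2)⁻¹ := by
          field_simp
      _ ≤ ℓ.factorial * (‖c‖)^(ℓ+1) * (1+ξ^2)⁻¹ := by
          apply mul_le_mul_of_nonneg_right (mul_le_mul_of_nonneg_left hpow (by positivity)) (by positivity)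
      _ = ‖c‖ ^ (ℓ + 1) * (↑ℓ.factorial * (1 + ξ ^ 2)⁻¹) := by ring
      _ ≤ ↑ℓ.factorial * (1 + ξ ^ 2)⁻¹ * ‖c‖ ^ (ℓ + 1) := le_of_eq (by ring)

/-- Walfisz's formula: `(1/(2πi)) ∫_{(a)} e^{xω} ω^{-(ℓ+1)} dω` equals `x^ℓ/ℓ!` for `x > 0`
and `0` for `x ≤ 0`.  With `ω = a + it`, `dω = i dt`, this is
`(1/(2π)) ∫_ℝ e^{x(a+it)} (a+it)^{-(ℓ+1)} dt`. -/
theorem walfisz_formula (ℓ : ℕ) (hl : 1 ≤ ℓ) (a : ℝ) (ha : 0 < a) (x : ℝ) :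
    (1 / (2 * Real.pi) : ℂ) *
      ∫ t : ℝ, Complex.exp ((x : ℂ) * ((a : ℂ) + t * Complex.I)) *
        ((a : ℂ) + t * Complex.I) ^ (-(ℓ + 1 : ℂ))
    = if 0 < x then (x : ℂ) ^ ℓ / (Nat.factorial ℓ : ℂ) else 0 := by
  set F := Set.indicator (Ioi 0) (fun u : ℝ ↦ (u:ℂ)^ℓ * Complex.exp (-(a * u))) with hFdef
  have hIntF : Integrable F := by
    rw [hFdef, integrable_indicator_iff measurableSet_Ioi]
    exact aux_integrableOn ℓ (c := (a:ℂ)) (by simpa using ha)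
  have hinv : 𝓕⁻ (𝓕 F) x = F x :=
    hIntF.fourierInv_fourier_eq (aux_int_Ff hl ha) ((aux_cont hl a).continuousAt)
  rw [Real.fourierInv_eq_fourier_neg] at hinv
  have hF : 𝓕 F = fun ξ : ℝ ↦ (ℓ.factorial : ℂ) / ((a:ℂ) + ((2 * π * ξ : ℝ):ℂ) * Complex.I) ^ (ℓ+1) :=
    funext (aux_fourier ℓ ha)
  rw [hF, Real.fourier_real_eq_integral_exp_smul] at hinv
  set g : ℝ → ℂ := fun t ↦ Complex.exp ((x:ℂ) * ((a:ℂ) + (t:ℂ) * Complex.I)) *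
    (((a:ℂ) + (t:ℂ) * Complex.I)^(ℓ+1))⁻¹ with hg
  have hcpow : (∫ t : ℝ, Complex.exp ((x : ℂ) * ((a : ℂ) + t * Complex.I)) *
      ((a : ℂ) + t * Complex.I) ^ (-(ℓ + 1 : ℂ))) = ∫ t : ℝ, g t := by
    apply integral_congr_ae
    refine Filter.Eventually.of_forall fun t ↦ ?_
    have hkey : ((a:ℂ) + (t:ℂ) * Complex.I) ^ (-(ℓ + 1 : ℂ))
        = (((a:ℂ) + (t:ℂ) * Complex.I)^(ℓ+1))⁻¹ := by
      rw [show (-(ℓ+1:ℂ)) = -((ℓ+1 : ℕ):ℂ) by push_cast; ring, Complex.cpow_neg,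
        Complex.cpow_natCast]
    simp only [hg, hkey]
  rw [hcpow]
  have hsub := MeasureTheory.Measure.integral_comp_mul_left g (2*π)
  have h2pi : (0:ℝ) < 2*π := by positivity
  rw [abs_of_pos (inv_pos.mpr h2pi)] at hsub
  have hIg : ∫ t : ℝ, g t = (2*π : ℝ) • ∫ v : ℝ, g (2*π*v) := by
    rw [hsub, smul_smul, mul_inv_cancel₀ h2pi.ne', one_smul]
  rw [hIg]
  have hpt : ∀ v : ℝ, g (2*π*v) = Complex.exp ((a:ℂ) * (x:ℂ)) / (ℓ.factorial : ℂ) *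
      (Complex.exp (((-2*π*v*(-x) : ℝ):ℂ) * Complex.I) •
        ((ℓ.factorial : ℂ) / ((a:ℂ) + ((2 * π * v : ℝ):ℂ) * Complex.I) ^ (ℓ+1))) := by
    intro v
    rw [hg, smul_eq_mul]
    have hexp : Complex.exp ((x:ℂ) * ((a:ℂ) + ((2*π*v : ℝ):ℂ) * Complex.I))
        = Complex.exp ((a:ℂ) * (x:ℂ)) * Complex.exp (((-2*π*v*(-x) : ℝ):ℂ) * Complex.I) := by
      rw [← Complex.exp_add]
      congr 1
      push_cast
      ring
    have hfact : (ℓ.factorial : ℂ) ≠ 0 := Nat.cast_ne_zero.mpr ℓ.factorial_ne_zero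
    push_cast
    rw [show ((2:ℂ) * π * v) = ((2*π*v : ℝ):ℂ) by push_cast; ring] at *
    rw [hexp]
    have hne := pow_ne_zero (ℓ+1) (aux_c_ne ha (2*π*v))
    push_cast at hne
    field_simp
    push_cast
    ring
  have : ∫ v : ℝ, g (2*π*v) = Complex.exp ((a:ℂ) * (x:ℂ)) / (ℓ.factorial : ℂ) * F x := by
    rw [integral_congr_ae (Filter.Eventually.of_forall hpt), MeasureTheory.integral_const_mul,
      hinv]
  rw [this]
  rw [Complex.real_smul]
  have hfact : (ℓ.factorial : ℂ) ≠ 0 := Nat.cast_ne_zero.mpr ℓ.factorial_ne_zero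
  have hpi : ((2*π : ℝ):ℂ) ≠ 0 := Complex.ofReal_ne_zero.mpr h2pi.ne'
  by_cases hx : 0 < x
  · rw [if_pos hx, hFdef, Set.indicator_of_mem (by exact hx : x ∈ Ioi (0:ℝ))]
    push_cast
    rw [Complex.exp_neg]
    have hpine : ((π:ℝ):ℂ) ≠ 0 := Complex.ofReal_ne_zero.mpr Real.pi_ne_zero
    field_simp [Complex.exp_ne_zero]
  · rw [if_neg hx, hFdef, Set.indicator_of_notMem (by simpa using hx)]
    ring
end

section
/- Let Λ be the von Mangoldt function, r_G(n) = ∑_{m₁+m₂=n} Λ(m₁)Λ(m₂), S̃(z) = ∑_{m≥1} Λ(m)e^{-mz}, N a positive integer, a > 0 and k > 0. Then ∑_{n≤N} r_G(n)(N-n)^k/Γ(k+1) = (1/(2πi)) ∫ over the line Re(z)=a of e^{Nz} z^{-k-1} S̃(z)² dz. -/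
set_option maxHeartbeats 1000000

open Complex MeasureTheory Set Filter Topology FourierTransform


/-- integrability of `u^k e^{-bu}` on `(0,∞)` for `Re b > 0`. -/
lemma intOn_cpow_exp {k : ℝ} (hk : 0 < k) {b : ℂ} (hb : 0 < b.re) :
    IntegrableOn (fun u : ℝ => (u : ℂ) ^ (k : ℂ) * Complex.exp (-(b * u))) (Ioi 0) := by
  have hbase : IntegrableOn (fun u : ℝ => u ^ k * Real.exp (-b.re * u)) (Ioi 0) := by
    have := integrableOn_rpow_mul_exp_neg_mul_rpow (p := 1) (by linarith : (-1:ℝ) < k) one_pos hb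
    simpa using this
  apply Integrable.mono' hbase
  · apply ContinuousOn.aestronglyMeasurable _ measurableSet_Ioi
    intro u hu
    apply ContinuousWithinAt.mul
    · exact (((continuousAt_cpow_const (by simp [mem_Ioi.mp hu] : (u:ℂ) ∈ slitPlane)).comp
        Complex.continuous_ofReal.continuousAt)).continuousWithinAt
    · exact (Complex.continuous_exp.comp (by fun_prop)).continuousWithinAt
  · filter_upwards [ae_restrict_mem measurableSet_Ioi] with u hu
    have hu' : (0:ℝ) < u := hu
    rw [norm_mul, Complex.norm_cpow_real,
      Complex.norm_exp, Complex.norm_real, Real.norm_eq_abs, abs_of_pos hu']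
    simp only [neg_re, mul_re, Complex.ofReal_re, Complex.ofReal_im, mul_zero, sub_zero]
    rw [neg_mul]

/-- Cahen–Mellin / complex-rate Gamma integral. -/
lemma cpow_exp_integral {k : ℝ} (hk : 0 < k) {b : ℂ} (hb : 0 < b.re) :
    ∫ u in Ioi (0:ℝ), (u : ℂ) ^ (k : ℂ) * Complex.exp (-(b * u))
      = Complex.Gamma ((k : ℂ) + 1) * b ^ (-(k : ℂ) - 1) := by
  set U : Set ℂ := {z | 0 < z.re} with hU
  have hUopen : IsOpen U := isOpen_lt continuous_const Complex.continuous_re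
  set F : ℂ → ℂ := fun z => ∫ u in Ioi (0:ℝ), (u : ℂ) ^ (k : ℂ) * Complex.exp (-(z * u)) with hF
  set G : ℂ → ℂ := fun z => Complex.Gamma ((k : ℂ) + 1) * z ^ (-(k : ℂ) - 1) with hG
  -- F is differentiable on U
  have hFdiff : DifferentiableOn ℂ F U := by
    intro z₀ hz₀
    have hz₀' : 0 < z₀.re := hz₀
    set ε : ℝ := z₀.re / 2 with hε
    have hεpos : 0 < ε := by positivity
    have key := hasDerivAt_integral_of_dominated_loc_of_deriv_le (μ := volume.restrict (Ioi 0))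
      (F := fun z u => (u : ℂ) ^ (k : ℂ) * Complex.exp (-(z * (u:ℝ))))
      (F' := fun z u => (u : ℂ) ^ (k : ℂ) * (-(u:ℂ) * Complex.exp (-(z * (u:ℝ)))))
      (x₀ := z₀) (bound := fun u : ℝ => u ^ (k+1) * Real.exp (-ε * u)) (Metric.ball_mem_nhds z₀ hεpos)
      ?_ ?_ ?_ ?_ ?_ ?_
    · exact (key.2.differentiableAt).differentiableWithinAt
    · -- measurability for z near z₀
      filter_upwards with z
      apply ContinuousOn.aestronglyMeasurable _ measurableSet_Ioi
      intro u hu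
      apply ContinuousWithinAt.mul
      · exact (((continuousAt_cpow_const (by simp [mem_Ioi.mp hu] : (u:ℂ) ∈ slitPlane)).comp
          Complex.continuous_ofReal.continuousAt)).continuousWithinAt
      · exact (Complex.continuous_exp.comp (by fun_prop)).continuousWithinAt
    · exact intOn_cpow_exp hk hz₀'
    · apply ContinuousOn.aestronglyMeasurable _ measurableSet_Ioi
      intro u hu
      apply ContinuousWithinAt.mul
      · exact (((continuousAt_cpow_const (by simp [mem_Ioi.mp hu] : (u:ℂ) ∈ slitPlane)).comp
          Complex.continuous_ofReal.continuousAt)).continuousWithinAt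
      · exact ((by fun_prop : Continuous fun u:ℝ => -(u:ℂ) * Complex.exp (-(z₀ * (u:ℝ))))).continuousWithinAt
    · -- bound
      filter_upwards [ae_restrict_mem measurableSet_Ioi] with u hu z hz
      have hu' : (0:ℝ) < u := hu
      have hre : ε ≤ z.re := by
        have h1 : |(z - z₀).re| ≤ ‖z - z₀‖ := Complex.abs_re_le_norm _
        have h2 : ‖z - z₀‖ < ε := by
          rwa [Metric.mem_ball, Complex.dist_eq] at hz
        have := abs_le.mp (h1.trans h2.le)
        simp only [Complex.sub_re] at this
        linarith [this.1]
      rw [norm_mul, norm_mul,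
        Complex.norm_cpow_real, Complex.norm_exp, Complex.norm_real, Real.norm_eq_abs, abs_of_pos hu',
        norm_neg, Complex.norm_real, Real.norm_eq_abs, abs_of_pos hu']
      have : u ^ k * (u * Real.exp ((-(z * (u:ℝ))).re)) = u ^ (k+1) * Real.exp ((-(z * (u:ℝ))).re) := by
        rw [Real.rpow_add_one hu'.ne']; ring
      rw [this]
      apply mul_le_mul_of_nonneg_left _ (Real.rpow_nonneg hu'.le _)
      apply Real.exp_le_exp.mpr
      simp only [neg_re, mul_re, Complex.ofReal_re, Complex.ofReal_im, mul_zero, sub_zero, neg_mul]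
      nlinarith
    · -- bound integrable
      have := integrableOn_rpow_mul_exp_neg_mul_rpow (p := 1) (by linarith : (-1:ℝ) < k + 1) one_pos hεpos
      have h' : IntegrableOn (fun u : ℝ => u ^ (k+1) * Real.exp (-ε * u)) (Ioi 0) := by simpa using this
      exact h'
    · -- differentiability of integrand
      filter_upwards [ae_restrict_mem measurableSet_Ioi] with u hu z hz
      have : HasDerivAt (fun z : ℂ => Complex.exp (-(z * (u:ℝ)))) (-(u:ℂ) * Complex.exp (-(z * (u:ℝ)))) z := by
        have h1 : HasDerivAt (fun z : ℂ => -(z * (u:ℝ))) (-(u:ℂ)) z := by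
          simpa using ((hasDerivAt_id z).mul_const ((u:ℝ):ℂ)).fun_neg
        simpa [mul_comm] using h1.cexp
      exact (this.const_mul _)
  have hGdiff : DifferentiableOn ℂ G U := by
    intro z hz
    apply DifferentiableWithinAt.const_mul
    have : DifferentiableAt ℂ (fun z : ℂ => z ^ (-(k:ℂ) - 1)) z := by
      have h3 : HasDerivAt (fun z : ℂ => z ^ (-(k:ℂ) - 1))
          ((-(k:ℂ)-1) * z ^ (-(k:ℂ) - 1 - 1) * 1) z :=
        (hasDerivAt_id z).cpow_const (Or.inl hz)
      exact h3.differentiableAt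
    exact this.differentiableWithinAt
  -- equality on positive reals
  have hreal : ∀ r : ℝ, 0 < r → F ((r:ℝ):ℂ) = G ((r:ℝ):ℂ) := by
    intro r hr
    have := Complex.integral_cpow_mul_exp_neg_mul_Ioi
      (a := (k:ℂ) + 1) (r := r) (by simp; linarith) hr
    have heq : ∀ u : ℝ, u ∈ Ioi (0:ℝ) →
        (u:ℂ) ^ ((k:ℂ) + 1 - 1) * Complex.exp (-((r:ℝ) * u)) =
        (u:ℂ) ^ (k:ℂ) * Complex.exp (-((r:ℂ) * (u:ℝ))) := by
      intro u hu
      norm_num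
    rw [hF, hG]
    simp only
    rw [← setIntegral_congr_fun measurableSet_Ioi heq, this]
    rw [one_div, inv_cpow _ _ (by rw [Complex.arg_ofReal_of_nonneg hr.le]; exact Real.pi_ne_zero.symm),
      ← cpow_neg]
    have : -((k:ℂ) + 1) = -(k:ℂ) - 1 := by ring
    rw [this, mul_comm]
  -- identity theorem
  have hfreq : ∃ᶠ z in 𝓝[≠] (1:ℂ), F z = G z := by
    have htend : Tendsto (fun n : ℕ => ((1 + (n+1:ℝ)⁻¹ : ℝ) : ℂ)) atTop (𝓝[≠] (1:ℂ)) := by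
      apply tendsto_nhdsWithin_of_tendsto_nhds_of_eventually_within
      · have : Tendsto (fun n : ℕ => (1 + (n+1:ℝ)⁻¹ : ℝ)) atTop (𝓝 1) := by
          have h0 : Tendsto (fun n : ℕ => ((n+1:ℝ))⁻¹) atTop (𝓝 0) := by
            simpa [one_div] using tendsto_one_div_add_atTop_nhds_zero_nat (𝕜 := ℝ)
          simpa using (tendsto_const_nhds.add h0)
        exact (Complex.continuous_ofReal.tendsto 1).comp this
      · filter_upwards with n
        simp only [mem_compl_iff, mem_singleton_iff]
        intro h
        have : (1 + (n+1:ℝ)⁻¹ : ℝ) = 1 := by exact_mod_cast h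
        have : ((n:ℝ)+1)⁻¹ = 0 := by linarith
        simp at this
        linarith [this]
    apply htend.frequently
    apply Filter.Eventually.frequently
    filter_upwards with n
    exact hreal _ (by positivity)
  have := AnalyticOnNhd.eqOn_of_preconnected_of_frequently_eq
    (hFdiff.analyticOnNhd hUopen) (hGdiff.analyticOnNhd hUopen)
    ((convex_halfSpace_re_gt 0).isPreconnected) (by simp [hU] : (1:ℂ) ∈ U) hfreq
  exact this hb

/-- Integrability of `|a+ti|^{-(k+1)}` on ℝ. -/
lemma line_weight_integrable {a k : ℝ} (ha : 0 < a) (hk : 0 < k) :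
    Integrable (fun t : ℝ => ‖(a:ℂ) + t * Complex.I‖ ^ (-(k+1)) : ℝ → ℝ) := by
  set f : ℝ → ℝ := fun t => ‖(a:ℂ) + t * Complex.I‖ ^ (-(k+1)) with hf
  have habs : ∀ t : ℝ, 0 < ‖(a:ℂ) + t * Complex.I‖ := by
    intro t
    apply norm_pos_iff.mpr
    intro h
    have := congrArg Complex.re h
    simp at this
    linarith
  have hcont : Continuous f := by
    apply Continuous.rpow_const
    · exact continuous_norm.comp (by fun_prop)
    · intro t; exact Or.inl (habs t).ne'
  have him : ∀ t : ℝ, |t| ≤ ‖(a:ℂ) + t * Complex.I‖ := by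
    intro t
    have := Complex.abs_im_le_norm ((a:ℂ) + t * Complex.I)
    simpa using this
  have hbound : ∀ t : ℝ, t ≠ 0 → f t ≤ |t| ^ (-(k+1)) := by
    intro t ht
    exact Real.rpow_le_rpow_of_nonpos (abs_pos.mpr ht) (him t) (by linarith)
  have hIoi : IntegrableOn f (Ioi 1) := by
    apply Integrable.mono' (g := fun t : ℝ => t ^ (-(k+1)))
    · exact integrableOn_Ioi_rpow_of_lt (by linarith) one_pos
    · exact hcont.aestronglyMeasurable.restrict
    · filter_upwards [ae_restrict_mem measurableSet_Ioi] with t ht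
      have h1 : (0:ℝ) < t := lt_trans one_pos ht
      rw [Real.norm_eq_abs, abs_of_pos (Real.rpow_pos_of_pos (habs t) _)]
      calc f t ≤ |t| ^ (-(k+1)) := hbound t h1.ne'
        _ = t ^ (-(k+1)) := by rw [abs_of_pos h1]
  have hIic : IntegrableOn f (Iio (-1)) := by
    have hsymm : ∀ t : ℝ, f (-t) = f t := by
      intro t
      have : ‖(a:ℂ) + (-t) * Complex.I‖ = ‖(a:ℂ) + t * Complex.I‖ := by
        rw [← Complex.norm_conj ((a:ℂ) + t * Complex.I)]
        congr 1
        simp [Complex.ext_iff]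
      simp only [hf, Complex.ofReal_neg, neg_mul] at this ⊢
      rw [this]
    have : IntegrableOn (fun t => f (-t)) (Ioi 1) := by
      apply hIoi.congr_fun _ measurableSet_Ioi
      intro t _; exact (hsymm t).symm
    have h1 : Integrable ((Ioi (1:ℝ)).indicator (fun t => f (-t))) :=
      (integrable_indicator_iff measurableSet_Ioi).2 this
    have h2 := h1.comp_neg
    have h3 : (fun t => (Ioi (1:ℝ)).indicator (fun s => f (-s)) (-t)) = (Iio (-1:ℝ)).indicator f := by
      funext t
      by_cases ht : t < -1
      · rw [Set.indicator_of_mem (by simp only [mem_Ioi]; linarith : (-t) ∈ Ioi (1:ℝ)),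
          Set.indicator_of_mem (by simpa using ht : t ∈ Iio (-1:ℝ))]
        simp
      · rw [Set.indicator_of_notMem (by simp only [mem_Ioi]; intro h; exact ht (by linarith)), Set.indicator_of_notMem (by simpa using ht)]
    rw [h3] at h2
    exact (integrable_indicator_iff measurableSet_Iio).1 h2
  have hIcc : IntegrableOn f (Icc (-1) 1) := hcont.integrableOn_Icc
  have : IntegrableOn f univ := by
    apply ((hIic.union hIcc).union hIoi).mono_set
    intro t _
    rcases lt_or_ge t (-1) with h | h
    · exact Or.inl (Or.inl h)
    rcases le_or_gt t 1 with h' | h'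
    · exact Or.inl (Or.inr ⟨h, h'⟩)
    · exact Or.inr h'
  rwa [integrableOn_univ] at this

lemma key_line_integral {a k : ℝ} (ha : 0 < a) (hk : 0 < k) (x : ℝ) :
    (∫ t : ℝ, Complex.exp ((x:ℂ) * ((a:ℂ) + t * Complex.I))
        * ((a:ℂ) + t * Complex.I) ^ (-(k:ℂ) - 1))
      = ((2 * Real.pi : ℝ) : ℂ) * (if 0 ≤ x then ((x ^ k / Real.Gamma (k+1) : ℝ) : ℂ) else 0) := by
  have hG0 : Real.Gamma (k+1) ≠ 0 := (Real.Gamma_pos_of_pos (by linarith)).ne'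
  have hGC : Complex.Gamma ((k:ℂ)+1) = ((Real.Gamma (k+1) : ℝ) : ℂ) := by
    rw [← Complex.Gamma_ofReal]; push_cast; ring_nf
  have hGC0 : Complex.Gamma ((k:ℂ)+1) ≠ 0 := by rw [hGC]; exact_mod_cast hG0
  set g : ℝ → ℂ := (Ioi (0:ℝ)).indicator (fun y : ℝ => (y:ℂ) ^ (k:ℂ) * Complex.exp (-((a:ℂ) * y))) with hg
  have hgint : Integrable g := by
    apply (integrable_indicator_iff measurableSet_Ioi).2
    exact intOn_cpow_exp hk (by simpa using ha)
  have hgcont : Continuous g := by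
    rw [continuous_iff_continuousAt]
    intro y
    rcases lt_trichotomy y 0 with hy | hy | hy
    · have : g =ᶠ[𝓝 y] fun _ => 0 := by
        filter_upwards [Iio_mem_nhds hy] with z hz
        exact Set.indicator_of_notMem (by simpa using le_of_lt hz) _
      exact continuousAt_const.congr this.symm
    · subst hy
      have h0 : g 0 = 0 := Set.indicator_of_notMem (by simp) _
      rw [ContinuousAt, h0]
      apply squeeze_zero_norm (a := fun y : ℝ => |y| ^ k)
      · intro z
        rcases le_or_gt z 0 with hz | hz
        · rw [hg, Set.indicator_of_notMem (by simpa using hz)]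
          simp [Real.rpow_nonneg (abs_nonneg z) k]
        · rw [hg, Set.indicator_of_mem (by simpa using hz : z ∈ Ioi (0:ℝ))]
          rw [norm_mul, Complex.norm_cpow_real,
            Complex.norm_real, Real.norm_eq_abs, Complex.norm_exp, abs_of_pos hz]
          have h1 : Real.exp ((-((a:ℂ) * z)).re) ≤ 1 := by
            rw [Real.exp_le_one_iff]
            simp only [neg_re, mul_re, Complex.ofReal_re, Complex.ofReal_im, mul_zero, sub_zero]
            nlinarith
          nlinarith [Real.rpow_nonneg hz.le k, Real.exp_pos ((-((a:ℂ) * z)).re)]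
      · have hc : Continuous fun y : ℝ => |y| ^ k :=
          continuous_abs.rpow_const (fun _ => Or.inr hk.le)
        have := hc.continuousAt (x := (0:ℝ))
        rw [ContinuousAt] at this
        simpa [Real.zero_rpow hk.ne'] using this
    · have : g =ᶠ[𝓝 y] fun z : ℝ => (z:ℂ) ^ (k:ℂ) * Complex.exp (-((a:ℂ) * z)) := by
        filter_upwards [Ioi_mem_nhds hy] with z hz
        exact Set.indicator_of_mem hz _
      apply ContinuousAt.congr _ this.symm
      apply ContinuousAt.mul
      · exact (continuousAt_cpow_const (by simp [hy] : (y:ℂ) ∈ slitPlane)).comp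
          Complex.continuous_ofReal.continuousAt
      · exact (Complex.continuous_exp.comp (by fun_prop)).continuousAt
  have hFg : ∀ ξ : ℝ, 𝓕 g ξ
      = Complex.Gamma ((k:ℂ)+1) * ((a:ℂ) + (2*Real.pi*ξ : ℝ) * Complex.I) ^ (-(k:ℂ) - 1) := by
    intro ξ
    rw [Real.fourier_real_eq]
    have hind : ∀ v : ℝ, (Real.fourierChar (-(v*ξ)) : Circle) • g v
        = (Ioi (0:ℝ)).indicator (fun v : ℝ =>
            (v:ℂ) ^ (k:ℂ) * Complex.exp (-(((a:ℂ) + (2*Real.pi*ξ : ℝ) * Complex.I) * v))) v := by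
      intro v
      by_cases hv : v ∈ Ioi (0:ℝ)
      · rw [hg, Set.indicator_of_mem hv, Set.indicator_of_mem hv, Circle.smul_def,
          Real.fourierChar_apply, smul_eq_mul]
        rw [mul_comm, mul_assoc, ← Complex.exp_add]
        congr 2
        push_cast
        ring
      · rw [hg, Set.indicator_of_notMem hv, Set.indicator_of_notMem hv, smul_zero]
    rw [show (fun v => (Real.fourierChar (-(v*ξ)) : Circle) • g v) = _ from funext hind,
      integral_indicator measurableSet_Ioi]
    exact cpow_exp_integral hk (by simpa using ha)
  have hFgint : Integrable (𝓕 g) := by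
    rw [show 𝓕 g = fun ξ => Complex.Gamma ((k:ℂ)+1)
      * ((a:ℂ) + (2*Real.pi*ξ : ℝ) * Complex.I) ^ (-(k:ℂ) - 1) from funext hFg]
    have hbase : Integrable (fun ξ : ℝ =>
        ‖(a:ℂ) + (2*Real.pi*ξ : ℝ) * Complex.I‖ ^ (-(k+1)) : ℝ → ℝ) := by
      have h2π : (2*Real.pi : ℝ) ≠ 0 := by positivity
      have := (integrable_comp_mul_left_iff
        (fun t : ℝ => ‖(a:ℂ) + t * Complex.I‖ ^ (-(k+1)) : ℝ → ℝ) h2π).2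
        (line_weight_integrable ha hk)
      simpa using this
    apply Integrable.mono' (hbase.const_mul (‖Complex.Gamma ((k:ℂ)+1)‖))
    · apply Continuous.aestronglyMeasurable
      apply continuous_const.mul
      rw [continuous_iff_continuousAt]
      intro ξ
      apply ContinuousAt.cpow (by fun_prop) continuousAt_const
      rw [Complex.mem_slitPlane_iff]; left; simp [ha]
    · filter_upwards with ξ
      rw [norm_mul]
      have : (-(k:ℂ) - 1) = ((-(k+1) : ℝ) : ℂ) := by push_cast; ring
      rw [this, Complex.norm_cpow_real]
  have hinv := hgint.fourierInv_fourier_eq hFgint (hgcont.continuousAt (x := x))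
  -- unfold the inverse Fourier integral
  rw [Real.fourierInv_eq'] at hinv
  simp only [RCLike.inner_apply', starRingEnd_apply, star_trivial] at hinv
  have hinv2 : (∫ v : ℝ, Complex.exp ((2 * Real.pi * (v * x) : ℝ) * Complex.I)
      * (Complex.Gamma ((k:ℂ)+1) * ((a:ℂ) + (2*Real.pi*v : ℝ) * Complex.I) ^ (-(k:ℂ) - 1))) = g x := by
    rw [← hinv]
    congr 1
    funext v
    rw [hFg v, smul_eq_mul]
  -- change of variables t = 2π v
  have hchg := Measure.integral_comp_mul_left
    (fun t : ℝ => Complex.exp ((x:ℂ) * ((a:ℂ) + t * Complex.I))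
      * ((a:ℂ) + t * Complex.I) ^ (-(k:ℂ) - 1)) (2*Real.pi)
  have hptw : ∀ v : ℝ, Complex.exp ((x:ℂ) * ((a:ℂ) + (2*Real.pi*v : ℝ) * Complex.I))
      * ((a:ℂ) + (2*Real.pi*v : ℝ) * Complex.I) ^ (-(k:ℂ) - 1)
      = Complex.exp ((a*x : ℝ)) * (Complex.Gamma ((k:ℂ)+1))⁻¹
        * (Complex.exp ((2 * Real.pi * (v * x) : ℝ) * Complex.I)
          * (Complex.Gamma ((k:ℂ)+1) * ((a:ℂ) + (2*Real.pi*v : ℝ) * Complex.I) ^ (-(k:ℂ) - 1))) := by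
    intro v
    rw [show ((x:ℂ) * ((a:ℂ) + (2*Real.pi*v : ℝ) * Complex.I))
        = ((a*x : ℝ) : ℂ) + ((2 * Real.pi * (v * x) : ℝ) : ℂ) * Complex.I by push_cast; ring,
      Complex.exp_add]
    field_simp
  rw [show (fun v : ℝ => Complex.exp ((x:ℂ) * ((a:ℂ) + ((2*Real.pi*v : ℝ)) * Complex.I))
      * ((a:ℂ) + ((2*Real.pi*v : ℝ)) * Complex.I) ^ (-(k:ℂ) - 1)) = _ from funext hptw] at hchg
  rw [MeasureTheory.integral_const_mul, hinv2] at hchg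
  have h2π : (0:ℝ) < 2*Real.pi := by positivity
  rw [abs_of_pos (inv_pos.mpr h2π)] at hchg
  have hval : (∫ t : ℝ, Complex.exp ((x:ℂ) * ((a:ℂ) + t * Complex.I))
      * ((a:ℂ) + t * Complex.I) ^ (-(k:ℂ) - 1))
      = ((2*Real.pi : ℝ) : ℂ) * (Complex.exp ((a*x : ℝ))
        * (Complex.Gamma ((k:ℂ)+1))⁻¹ * g x) := by
    rw [hchg, Complex.real_smul, ← mul_assoc]
    have h1 : ((2*Real.pi:ℝ):ℂ) * ((((2*Real.pi:ℝ))⁻¹ : ℝ):ℂ) = 1 := by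
      have hne : (2 * (Real.pi:ℂ)) ≠ 0 := by
        simp [Real.pi_ne_zero]
      push_cast
      exact mul_inv_cancel₀ hne
    rw [h1, one_mul]
  rw [hval]
  rcases lt_trichotomy x 0 with hx | hx | hx
  · rw [if_neg (by linarith), hg, Set.indicator_of_notMem (by simpa using hx.le)]
    ring
  · subst hx
    rw [if_pos le_rfl, hg, Set.indicator_of_notMem (by simp)]
    rw [Real.zero_rpow hk.ne']
    push_cast
    ring
  · rw [if_pos hx.le, hg, Set.indicator_of_mem (by simpa using hx : x ∈ Ioi (0:ℝ))]
    have hxk : ((x:ℝ) : ℂ) ^ (k:ℂ) = ((x ^ k : ℝ) : ℂ) := (Complex.ofReal_cpow hx.le k).symm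
    have hexp : Complex.exp ((a*x : ℝ)) * Complex.exp (-((a:ℂ) * x)) = 1 := by
      rw [← Complex.exp_add]
      push_cast
      ring_nf
      exact Complex.exp_zero
    calc ((2*Real.pi : ℝ) : ℂ) * (Complex.exp ((a*x : ℝ)) * (Complex.Gamma ((k:ℂ)+1))⁻¹
          * ((x:ℂ) ^ (k:ℂ) * Complex.exp (-((a:ℂ) * x))))
        = ((2*Real.pi : ℝ) : ℂ) * ((x:ℂ) ^ (k:ℂ) * (Complex.Gamma ((k:ℂ)+1))⁻¹
            * (Complex.exp ((a*x : ℝ)) * Complex.exp (-((a:ℂ) * x)))) := by ring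
      _ = ((2*Real.pi : ℝ) : ℂ) * ((x ^ k / Real.Gamma (k+1) : ℝ) : ℂ) := by
          rw [hexp, mul_one, hxk, hGC]
          push_cast
          ring

open Real ArithmeticFunction in
/-- The fundamental relation: for `N ≥ 1`, `a > 0`, `k > 0`,
`∑_{n ≤ N} r_G(n) (N-n)^k / Γ(k+1) = (1/(2πi)) ∫_{(a)} e^{Nz} z^{-k-1} S̃(z)² dz`,
with the line parametrized as `z = a + it`. -/
theorem fundamental_relation (N : ℕ) (hN : 0 < N) (a k : ℝ) (ha : 0 < a) (hk : 0 < k) :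
    ((∑ n ∈ Finset.range (N + 1),
        (∑ p ∈ Finset.HasAntidiagonal.antidiagonal n, (Λ p.1 : ℝ) * Λ p.2)
          * ((N : ℝ) - n) ^ k / Real.Gamma (k + 1) : ℝ) : ℂ)
      = (1 / (2 * Real.pi) : ℂ) *
          ∫ t : ℝ, Complex.exp ((N : ℂ) * ((a : ℂ) + t * Complex.I))
            * ((a : ℂ) + t * Complex.I) ^ (-(k : ℂ) - 1)
            * (∑' m : ℕ, (Λ m : ℂ) * Complex.exp (-(m : ℂ) * ((a : ℂ) + t * Complex.I))) ^ 2 := by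
  set z : ℝ → ℂ := fun t => (a:ℂ) + t * Complex.I with hz
  set r : ℝ := Real.exp (-a) with hrdef
  have hr01 : 0 < r := Real.exp_pos _
  have hr : ‖r‖ < 1 := by
    rw [Real.norm_eq_abs, abs_of_pos hr01]
    exact Real.exp_lt_one_iff.mpr (by linarith)
  set rG : ℕ → ℝ := fun n => ∑ p ∈ Finset.HasAntidiagonal.antidiagonal n, (Λ p.1 : ℝ) * Λ p.2 with hrG
  have hrG0 : ∀ n, 0 ≤ rG n := fun n =>
    Finset.sum_nonneg fun p _ => mul_nonneg vonMangoldt_nonneg vonMangoldt_nonneg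
  have hrGle : ∀ n, rG n ≤ ((n:ℝ)+1)^3 := by
    intro n
    calc rG n ≤ ∑ p ∈ Finset.HasAntidiagonal.antidiagonal n, ((n:ℝ)+1) * ((n:ℝ)+1) := by
          apply Finset.sum_le_sum
          intro p hp
          have hp' := Finset.HasAntidiagonal.mem_antidiagonal.mp hp
          have h1 : (Λ p.1 : ℝ) ≤ (n:ℝ)+1 := by
            calc (Λ p.1 : ℝ) ≤ Real.log p.1 := vonMangoldt_le_log
              _ ≤ (p.1 : ℝ) := Real.log_le_self (Nat.cast_nonneg _)
              _ ≤ (n:ℝ)+1 := by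
                  have : p.1 ≤ n := by omega
                  exact_mod_cast Nat.le_succ_of_le this
          have h2 : (Λ p.2 : ℝ) ≤ (n:ℝ)+1 := by
            calc (Λ p.2 : ℝ) ≤ Real.log p.2 := vonMangoldt_le_log
              _ ≤ (p.2 : ℝ) := Real.log_le_self (Nat.cast_nonneg _)
              _ ≤ (n:ℝ)+1 := by
                  have : p.2 ≤ n := by omega
                  exact_mod_cast Nat.le_succ_of_le this
          exact mul_le_mul h1 h2 vonMangoldt_nonneg (by positivity)
      _ = ((n:ℝ)+1)^3 := by
          rw [Finset.sum_const, Finset.Nat.card_antidiagonal]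
          push_cast
          ring
  -- summability of the von Mangoldt exponential series
  have hzre : ∀ t : ℝ, (z t).re = a := by intro t; simp [hz]
  have hnormc : ∀ (t : ℝ) (m : ℕ), ‖(Λ m : ℂ) * Complex.exp (-(m:ℂ) * z t)‖
      = (Λ m : ℝ) * Real.exp (-((m:ℝ) * a)) := by
    intro t m
    rw [norm_mul, Complex.norm_real, Real.norm_eq_abs,
      _root_.abs_of_nonneg vonMangoldt_nonneg, Complex.norm_exp]
    congr 2
    simp [hz]
  have hsummc : ∀ t : ℝ, Summable fun m : ℕ => ‖(Λ m : ℂ) * Complex.exp (-(m:ℂ) * z t)‖ := by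
    intro t
    refine Summable.of_nonneg_of_le (fun m => norm_nonneg _) ?_
      (summable_pow_mul_geometric_of_norm_lt_one (R := ℝ) 1 hr)
    · intro m
      rw [hnormc]
      have hexp : Real.exp (-((m:ℝ) * a)) = r ^ m := by
        rw [hrdef, ← Real.exp_nat_mul]
        congr 1
        ring
      rw [hexp, pow_one]
      apply mul_le_mul_of_nonneg_right _ (pow_nonneg hr01.le m)
      rcases Nat.eq_zero_or_pos m with hm | hm
      · subst hm; simp
      · calc (Λ m : ℝ) ≤ Real.log m := vonMangoldt_le_log
          _ ≤ (m:ℝ) := Real.log_le_self (Nat.cast_nonneg _)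
  -- squaring the series
  have hsq : ∀ t : ℝ, (∑' m : ℕ, (Λ m : ℂ) * Complex.exp (-(m:ℂ) * z t)) ^ 2
      = ∑' n : ℕ, ((rG n : ℝ) : ℂ) * Complex.exp (-(n:ℂ) * z t) := by
    intro t
    rw [sq, tsum_mul_tsum_eq_tsum_sum_antidiagonal_of_summable_norm (hsummc t) (hsummc t)]
    apply tsum_congr
    intro n
    have : ∀ p ∈ Finset.HasAntidiagonal.antidiagonal n,
        ((Λ p.1 : ℂ) * Complex.exp (-(p.1:ℂ) * z t)) * ((Λ p.2 : ℂ) * Complex.exp (-(p.2:ℂ) * z t))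
        = (((Λ p.1 : ℝ) * Λ p.2 : ℝ) : ℂ) * Complex.exp (-(n:ℂ) * z t) := by
      intro p hp
      have hp' : p.1 + p.2 = n := Finset.HasAntidiagonal.mem_antidiagonal.mp hp
      rw [mul_mul_mul_comm, ← Complex.exp_add]
      congr 1
      · push_cast; ring
      · congr 1
        rw [← hp']
        push_cast
        ring
    rw [Finset.sum_congr rfl this, ← Finset.sum_mul]
    congr 1
    rw [hrG]
    push_cast
    ring
  -- the summands after interchange
  set G : ℕ → ℝ → ℂ := fun n t => ((rG n : ℝ) : ℂ)
    * (Complex.exp ((N:ℂ) * z t) * (z t) ^ (-(k:ℂ) - 1) * Complex.exp (-(n:ℂ) * z t)) with hG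
  have hzpow : ∀ t : ℝ, ‖(z t) ^ (-(k:ℂ) - 1)‖ = ‖z t‖ ^ (-(k+1)) := by
    intro t
    rw [show (-(k:ℂ) - 1) = ((-(k+1) : ℝ) : ℂ) by push_cast; ring, Complex.norm_cpow_real]
  have hnormG : ∀ n t, ‖G n t‖
      = (rG n * Real.exp (((N:ℝ) - n) * a)) * ‖z t‖ ^ (-(k+1)) := by
    intro n t
    simp only [hG, norm_mul, Complex.norm_real, Real.norm_eq_abs, Complex.norm_exp, hzpow]
    rw [_root_.abs_of_nonneg (hrG0 n)]
    have hN' : ((N:ℂ) * z t).re = (N:ℝ) * a := by simp [hz]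
    have hn' : ((-(n:ℂ)) * z t).re = -((n:ℝ) * a) := by simp [hz]
    rw [hN', hn']
    have h3 : Real.exp ((N:ℝ)*a) * Real.exp (-((n:ℝ)*a)) = Real.exp (((N:ℝ) - n)*a) := by
      rw [← Real.exp_add]; ring_nf
    rw [← h3]
    ring
  have hWint := line_weight_integrable ha hk
  have hcpow : Continuous fun t : ℝ => (z t) ^ (-(k:ℂ) - 1) := by
    rw [continuous_iff_continuousAt]
    intro t
    apply ContinuousAt.cpow (by fun_prop) continuousAt_const
    rw [Complex.mem_slitPlane_iff]
    left
    simp [hz, ha]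
  have hGint : ∀ n, Integrable (G n) := by
    intro n
    apply Integrable.mono' (hWint.const_mul (rG n * Real.exp (((N:ℝ)-n)*a)))
    · apply Continuous.aestronglyMeasurable
      apply continuous_const.mul
      apply Continuous.mul (Continuous.mul _ hcpow)
      · exact Complex.continuous_exp.comp (by fun_prop)
      · exact Complex.continuous_exp.comp (by fun_prop)
    · filter_upwards with t
      rw [hnormG]
  have hintnormG : ∀ n, (∫ t : ℝ, ‖G n t‖)
      = (rG n * Real.exp (((N:ℝ)-n)*a)) * ∫ t : ℝ, ‖z t‖ ^ (-(k+1)) := by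
    intro n
    rw [show (fun t : ℝ => ‖G n t‖)
      = fun t => (rG n * Real.exp (((N:ℝ)-n)*a)) * (‖z t‖ ^ (-(k+1)))
      from funext (fun t => hnormG n t), MeasureTheory.integral_const_mul]
  have hcube : Summable fun n : ℕ => ((n:ℝ)+1)^3 * r^n := by
    have h3 := summable_pow_mul_geometric_of_norm_lt_one (R := ℝ) 3 hr
    have h2 := summable_pow_mul_geometric_of_norm_lt_one (R := ℝ) 2 hr
    have h1 := summable_pow_mul_geometric_of_norm_lt_one (R := ℝ) 1 hr
    have h0 := summable_pow_mul_geometric_of_norm_lt_one (R := ℝ) 0 hr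
    apply Summable.congr ((h3.add (h2.mul_left 3)).add ((h1.mul_left 3).add h0))
    intro n
    push_cast
    ring
  have hsumG : Summable fun n : ℕ => ∫ t : ℝ, ‖G n t‖ := by
    rw [show (fun n : ℕ => ∫ t : ℝ, ‖G n t‖)
      = fun n => (rG n * Real.exp (((N:ℝ)-n)*a)) * ∫ t : ℝ, ‖z t‖ ^ (-(k+1))
      from funext hintnormG]
    apply Summable.mul_right
    refine Summable.of_nonneg_of_le
      (fun n => mul_nonneg (hrG0 n) (Real.exp_pos _).le) ?_
      ((hcube.mul_right (Real.exp ((N:ℝ)*a))))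
    intro n
    have hexpand : Real.exp (((N:ℝ) - n)*a) = Real.exp ((N:ℝ)*a) * r^n := by
      rw [hrdef, ← Real.exp_nat_mul, ← Real.exp_add]
      congr 1
      ring
    rw [hexpand, ← mul_assoc]
    have := mul_le_mul_of_nonneg_right
      (mul_le_mul_of_nonneg_right (hrGle n) (Real.exp_pos ((N:ℝ)*a)).le)
      (pow_nonneg hr01.le n)
    calc rG n * rexp ((N:ℝ)*a) * r ^ n ≤ ((n:ℝ)+1)^3 * rexp ((N:ℝ)*a) * r^n := this
      _ = ((n:ℝ)+1)^3 * r^n * rexp ((N:ℝ)*a) := by ring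
  have hEeq : ∀ t : ℝ, Complex.exp ((N:ℂ) * z t) * (z t) ^ (-(k:ℂ)-1)
      * (∑' m : ℕ, (Λ m : ℂ) * Complex.exp (-(m:ℂ) * z t)) ^ 2 = ∑' n : ℕ, G n t := by
    intro t
    rw [hsq t, ← tsum_mul_left]
    apply tsum_congr
    intro n
    rw [hG]
    ring
  have hHasSum := hasSum_integral_of_summable_integral_norm hGint hsumG
  have hstep : (∫ t : ℝ, Complex.exp ((N : ℂ) * ((a : ℂ) + t * Complex.I))
            * ((a : ℂ) + t * Complex.I) ^ (-(k : ℂ) - 1)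
            * (∑' m : ℕ, (Λ m : ℂ) * Complex.exp (-(m : ℂ) * ((a : ℂ) + t * Complex.I))) ^ 2)
      = ∑' n : ℕ, ∫ t : ℝ, G n t := by
    rw [show (fun t : ℝ => Complex.exp ((N : ℂ) * ((a : ℂ) + t * Complex.I))
            * ((a : ℂ) + t * Complex.I) ^ (-(k : ℂ) - 1)
            * (∑' m : ℕ, (Λ m : ℂ) * Complex.exp (-(m : ℂ) * ((a : ℂ) + t * Complex.I))) ^ 2)
      = fun t => ∑' n : ℕ, G n t from funext hEeq]
    exact hHasSum.tsum_eq.symm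
  have hGval : ∀ n : ℕ, (∫ t : ℝ, G n t)
      = ((2 * Real.pi : ℝ) : ℂ) * (((rG n : ℝ):ℂ)
        * (if 0 ≤ (N:ℝ) - n then ((((N:ℝ) - n) ^ k / Real.Gamma (k+1) : ℝ) : ℂ) else 0)) := by
    intro n
    simp only [hG]
    rw [MeasureTheory.integral_const_mul]
    have hkey := key_line_integral ha hk ((N:ℝ) - n)
    have hcomb : (fun t : ℝ => Complex.exp ((N:ℂ) * z t) * (z t) ^ (-(k:ℂ) - 1)
        * Complex.exp (-(n:ℂ) * z t))
        = fun t : ℝ => Complex.exp ((((N:ℝ) - n : ℝ):ℂ) * ((a:ℂ) + t * Complex.I))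
          * ((a:ℂ) + t * Complex.I) ^ (-(k:ℂ) - 1) := by
      funext t
      rw [show ((((N:ℝ) - n : ℝ):ℂ) * ((a:ℂ) + t * Complex.I))
        = (N:ℂ) * z t + (-(n:ℂ) * z t) by rw [hz]; push_cast; ring, Complex.exp_add]
      rw [hz]
      ring
    rw [hcomb, hkey]
    ring
  rw [hstep]
  rw [show (fun n : ℕ => ∫ t : ℝ, G n t) = fun n : ℕ => ((2 * Real.pi : ℝ) : ℂ) * (((rG n : ℝ):ℂ)
        * (if 0 ≤ (N:ℝ) - n then ((((N:ℝ) - n) ^ k / Real.Gamma (k+1) : ℝ) : ℂ) else 0))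
    from funext hGval, tsum_mul_left, ← mul_assoc]
  have hπ : ((2 * Real.pi : ℝ) : ℂ) ≠ 0 := by
    push_cast
    simp [Real.pi_ne_zero]
  rw [show (1 / (2 * Real.pi) : ℂ) * ((2 * Real.pi : ℝ) : ℂ) = 1 by
    push_cast
    rw [one_div]
    exact inv_mul_cancel₀ (by push_cast at hπ; exact hπ), one_mul]
  rw [tsum_eq_sum (s := Finset.range (N+1))
    (by
      intro n hn
      have hn' : N + 1 ≤ n := by simpa using Finset.mem_range.not.mp hn
      rw [if_neg (by
        push_cast
        have : (N:ℝ) + 1 ≤ (n:ℝ) := by exact_mod_cast hn'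
        intro h
        linarith), mul_zero])]
  rw [Complex.ofReal_sum]
  apply Finset.sum_congr rfl
  intro n hn
  have hn' : n ≤ N := by
    have := Finset.mem_range.mp hn
    omega
  have hle : (0:ℝ) ≤ (N:ℝ) - n := by
    have : (n:ℝ) ≤ (N:ℝ) := by exact_mod_cast hn'
    linarith
  rw [if_pos hle, hrG, mul_div_assoc, Complex.ofReal_mul, Complex.ofReal_div]
end

section
/- Let ρ ∈ ℂ with 0 < Re(ρ) < 1, N a positive integer, and k > 0. Then (1/(2πi)) ∫ over the line Re(z)=1/N of e^{Nz} z^{-k-2-ρ} dz = N^{k+1+ρ}/Γ(ρ+k+2). -/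
open Complex Real MeasureTheory Set Filter

lemma aux_meas0 (a w : ℂ) :
    AEStronglyMeasurable (fun t : ℝ ↦ (t : ℂ) ^ (a - 1) * Complex.exp (-(w * t)))
      (volume.restrict (Ioi 0)) := by
  apply ContinuousOn.aestronglyMeasurable ?_ measurableSet_Ioi
  intro t ht
  refine ContinuousWithinAt.mul ?_ ?_
  · exact ((continuousAt_cpow_const (ofReal_mem_slitPlane.2 ht)).comp
      continuous_ofReal.continuousAt).continuousWithinAt
  · exact (Complex.continuous_exp.comp (by continuity)).continuousWithinAt

lemma aux_meas (a w : ℂ) :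
    AEStronglyMeasurable (fun t : ℝ ↦ (t : ℂ) ^ (a - 1) * (-(t : ℂ) * Complex.exp (-(w * t))))
      (volume.restrict (Ioi 0)) := by
  apply ContinuousOn.aestronglyMeasurable ?_ measurableSet_Ioi
  intro t ht
  refine ContinuousWithinAt.mul ?_ ?_
  · exact ((continuousAt_cpow_const (ofReal_mem_slitPlane.2 ht)).comp
      continuous_ofReal.continuousAt).continuousWithinAt
  · exact (Continuous.mul (by continuity) (Complex.continuous_exp.comp (by continuity))).continuousWithinAt

lemma aux_integrable {a : ℂ} (ha : 0 < a.re) {z : ℂ} (hz : 0 < z.re) :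
    IntegrableOn (fun t : ℝ ↦ (t : ℂ) ^ (a - 1) * Complex.exp (-(z * t))) (Ioi 0) := by
  have hint : IntegrableOn (fun t : ℝ ↦ t ^ (a.re - 1) * Real.exp (-z.re * t)) (Ioi 0) := by
    have := integrableOn_rpow_mul_exp_neg_mul_rpow (p := 1) (s := a.re - 1) (b := z.re)
      (by linarith) one_pos hz
    simpa [Real.rpow_one] using this
  refine hint.mono' (aux_meas0 a z) ?_
  filter_upwards [ae_restrict_mem measurableSet_Ioi] with t ht
  rw [norm_mul, Complex.norm_exp,
    norm_cpow_eq_rpow_re_of_pos ht]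
  simp only [sub_re, one_re, neg_re, mul_re, ofReal_re, ofReal_im, mul_zero, sub_zero]
  rw [neg_mul]

lemma laplace_gamma {a : ℂ} (ha : 0 < a.re) {z : ℂ} (hz : 0 < z.re) :
    ∫ t : ℝ in Ioi 0, (t : ℂ) ^ (a - 1) * Complex.exp (-(z * t))
      = Complex.Gamma a * z ^ (-a) := by
  set U : Set ℂ := {w | 0 < w.re} with hU
  have hUopen : IsOpen U := isOpen_lt continuous_const Complex.continuous_re
  have hUconn : IsPreconnected U := (convex_halfSpace_re_gt 0).isPreconnected
  set F : ℂ → ℂ := fun w => ∫ t : ℝ in Ioi 0, (t : ℂ) ^ (a - 1) * Complex.exp (-(w * t)) with hF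
  set G : ℂ → ℂ := fun w => Complex.Gamma a * w ^ (-a) with hG
  have hFd : DifferentiableOn ℂ F U := by
    intro w₀ hw₀
    have hw₀re : 0 < w₀.re := hw₀
    have key := hasDerivAt_integral_of_dominated_loc_of_deriv_le
      (μ := volume.restrict (Ioi 0)) (x₀ := w₀)
      (F := fun w (t : ℝ) ↦ (t : ℂ) ^ (a - 1) * Complex.exp (-(w * t)))
      (F' := fun w (t : ℝ) ↦ (t : ℂ) ^ (a - 1) * (-(t : ℂ) * Complex.exp (-(w * t))))
      (bound := fun t : ℝ ↦ t ^ a.re * Real.exp (-(w₀.re / 2) * t))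
      (Metric.ball_mem_nhds w₀ (half_pos hw₀re))
      (Eventually.of_forall fun w ↦ aux_meas0 a w)
      (aux_integrable ha hw₀re) (aux_meas a w₀) ?_ ?_ ?_
    · exact key.2.differentiableAt.differentiableWithinAt
    · -- bound
      filter_upwards [ae_restrict_mem measurableSet_Ioi] with t ht w hw
      have hre : w₀.re / 2 ≤ w.re := by
        have h1 : |w.re - w₀.re| ≤ dist w w₀ := by
          simpa [Complex.dist_eq] using Complex.abs_re_le_norm (w - w₀)
        have h2 := abs_lt.mp (h1.trans_lt (Metric.mem_ball.mp hw))
        linarith [h2.1]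
      rw [norm_mul, norm_mul, norm_cpow_eq_rpow_re_of_pos ht,
        Complex.norm_exp]
      simp only [sub_re, one_re, norm_neg, Complex.norm_real, Real.norm_eq_abs, neg_re, mul_re,
        ofReal_re, ofReal_im, mul_zero, sub_zero]
      rw [abs_of_pos ht]
      calc t ^ (a.re - 1) * (t * Real.exp (-(w.re * t)))
          = t ^ a.re * Real.exp (-(w.re * t)) := by
            rw [← mul_assoc, show a.re = a.re - 1 + 1 by ring, Real.rpow_add_one ht.ne']
            ring_nf
        _ ≤ t ^ a.re * Real.exp (-(w₀.re / 2) * t) := by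
            apply mul_le_mul_of_nonneg_left _ (Real.rpow_nonneg ht.le _)
            apply Real.exp_le_exp.mpr
            rw [neg_mul]
            exact neg_le_neg (mul_le_mul_of_nonneg_right hre ht.le)
    · -- bound integrable
      have := integrableOn_rpow_mul_exp_neg_mul_rpow (p := 1) (s := a.re) (b := w₀.re / 2)
        (by linarith) one_pos (half_pos hw₀re)
      simpa [Real.rpow_one, IntegrableOn] using this
    · -- h_diff
      filter_upwards [ae_restrict_mem measurableSet_Ioi] with t _ w _
      have h1 : HasDerivAt (fun w : ℂ ↦ -(w * t)) (-(t : ℂ)) w := by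
        exact (hasDerivAt_mul_const (x := w) (t : ℂ)).neg
      have := (h1.cexp).const_mul ((t : ℂ) ^ (a - 1))
      simpa only [mul_comm (-(t : ℂ))] using this
  have hGd : DifferentiableOn ℂ G U := by
    intro w hw
    exact (((hasDerivAt_id w).cpow_const (Or.inl hw)).differentiableAt.const_mul
      _).differentiableWithinAt
  have hreal : ∀ r : ℝ, 0 < r → F r = G r := by
    intro r hr
    have h1 := integral_cpow_mul_exp_neg_mul_Ioi ha hr
    have h2 : (1 / (r : ℂ)) ^ a = (r : ℂ) ^ (-a) := by
      rw [cpow_neg, one_div,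
        inv_cpow _ _ (by rw [arg_ofReal_of_nonneg hr.le]; exact Real.pi_ne_zero.symm)]
    simp only [hF]
    rw [show ∀ w : ℂ, (fun t : ℝ => (t : ℂ) ^ (a-1) * Complex.exp (-(w * t))) = fun t : ℝ =>
      (t : ℂ) ^ (a-1) * Complex.exp (-(w * t)) from fun _ => rfl]
    calc (∫ t : ℝ in Ioi 0, (t : ℂ) ^ (a - 1) * Complex.exp (-((r : ℂ) * t)))
        = (1 / (r : ℂ)) ^ a * Complex.Gamma a := h1
      _ = Complex.Gamma a * (r : ℂ) ^ (-a) := by rw [h2]; ring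
  have hfreq : ∃ᶠ w in nhdsWithin (1 : ℂ) {(1:ℂ)}ᶜ, F w = G w := by
    have htt : Tendsto (fun n : ℕ => ((1 + (n+1 : ℝ)⁻¹ : ℝ) : ℂ)) atTop
        (nhdsWithin (1 : ℂ) {(1:ℂ)}ᶜ) := by
      apply tendsto_nhdsWithin_of_tendsto_nhds_of_eventually_within
      · have : Tendsto (fun n : ℕ => (1 + (n+1 : ℝ)⁻¹ : ℝ)) atTop (nhds 1) := by
          simpa [one_div] using (tendsto_const_nhds : Tendsto (fun _ : ℕ => (1:ℝ)) atTop (nhds 1)).add (tendsto_one_div_add_atTop_nhds_zero_nat (𝕜 := ℝ))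
        exact (Complex.continuous_ofReal.tendsto 1).comp this
      · apply Eventually.of_forall
        intro n
        simp only [mem_compl_iff, mem_singleton_iff]
        intro h
        have : (1 + (n+1 : ℝ)⁻¹ : ℝ) = 1 := by exact_mod_cast h
        have : (n+1 : ℝ)⁻¹ > 0 := by positivity
        linarith [show (1 + (n+1 : ℝ)⁻¹ : ℝ) = 1 by exact_mod_cast h]
    exact htt.frequently (Frequently.of_forall fun n => hreal _ (by positivity))
  have := (hFd.analyticOnNhd hUopen).eqOn_of_preconnected_of_frequently_eq
    (hGd.analyticOnNhd hUopen) hUconn (show (1:ℂ) ∈ U by simp [hU]) hfreq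
  exact this hz
noncomputable def myf (a : ℂ) : ℝ → ℂ :=
  Set.indicator (Ioc 0 1) (fun x : ℝ => ((- Real.log x : ℝ) : ℂ) ^ (a - 1))

lemma exp_deriv_aux : ∀ x ∈ (univ : Set ℝ), HasDerivWithinAt (rexp ∘ Neg.neg)
    (-rexp (-x)) univ x := fun x _ ↦ mul_neg_one (rexp (-x)) ▸
    ((Real.hasDerivAt_exp (-x)).comp x (hasDerivAt_neg x)).hasDerivWithinAt

lemma exp_image_aux : rexp ∘ Neg.neg '' univ = Ioi 0 := by
  rw [Set.image_comp, Set.image_univ_of_surjective neg_surjective, Set.image_univ, Real.range_exp]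

lemma exp_injOn_aux : univ.InjOn (rexp ∘ Neg.neg) :=
  Real.exp_injective.injOn.comp neg_injective.injOn (univ.mapsTo_univ _)

lemma key_pointwise {a s : ℂ} (u : ℝ) :
    rexp (-u) • (((rexp (-u) : ℝ) : ℂ) ^ (s - 1) • myf a (rexp (-u)))
      = Set.indicator (Ici 0) (fun u : ℝ => Complex.exp (-(s * u)) * (u : ℂ) ^ (a - 1)) u := by
  have hmem : rexp (-u) ∈ Ioc (0:ℝ) 1 ↔ 0 ≤ u := by
    simp [Real.exp_pos, Real.exp_le_one_iff]
  have hcoe : ((rexp (-u) : ℝ) : ℂ) = Complex.exp (-(u : ℂ)) := by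
    rw [ofReal_exp]; push_cast; ring_nf
  by_cases h : 0 ≤ u
  · rw [Set.indicator_of_mem (by exact h : u ∈ Ici (0:ℝ))]
    rw [myf, Set.indicator_of_mem (hmem.mpr h)]
    have hlog : ((- Real.log (rexp (-u)) : ℝ) : ℂ) = (u : ℂ) := by
      rw [Real.log_exp]; push_cast; ring
    rw [hlog]
    have hpow : ((rexp (-u) : ℝ) : ℂ) ^ (s - 1) = Complex.exp (-(u : ℂ) * (s - 1)) := by
      rw [hcoe, cpow_def_of_ne_zero (Complex.exp_ne_zero _),
        Complex.log_exp (by simp [Real.pi_pos]) (by simp [Real.pi_nonneg])]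
    rw [hpow, smul_eq_mul, Complex.real_smul, hcoe, ← mul_assoc, ← Complex.exp_add]
    congr 2
    ring
  · rw [Set.indicator_of_notMem (by simpa using h), myf,
      Set.indicator_of_notMem (fun hc => h (hmem.mp hc))]
    simp

lemma mellin_myf {a : ℂ} (ha : 0 < a.re) {s : ℂ} (hs : 0 < s.re) :
    MellinConvergent (myf a) s ∧ mellin (myf a) s = Complex.Gamma a * s ^ (-a) := by
  have haux : IntegrableOn (fun u : ℝ => Complex.exp (-(s * u)) * (u : ℂ) ^ (a - 1)) (Ioi 0) :=
    (aux_integrable ha hs).congr_fun (fun u _ => mul_comm _ _) measurableSet_Ioi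
  constructor
  · rw [MellinConvergent, ← exp_image_aux, integrableOn_image_iff_integrableOn_abs_deriv_smul
      MeasurableSet.univ exp_deriv_aux exp_injOn_aux]
    simp only [Function.comp_apply]
    have heq : (fun u : ℝ => |(-rexp (-u))| • (((rexp (-u) : ℝ) : ℂ) ^ (s - 1) • myf a (rexp (-u))))
        = Set.indicator (Ici 0) (fun u : ℝ => Complex.exp (-(s * u)) * (u : ℂ) ^ (a - 1)) := by
      funext u
      rw [abs_neg, abs_of_pos (Real.exp_pos _), key_pointwise]
    rw [integrableOn_univ, heq, integrable_indicator_iff measurableSet_Ici]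
    exact (integrableOn_Ici_iff_integrableOn_Ioi).mpr haux
  · rw [mellin, ← exp_image_aux, integral_image_eq_integral_abs_deriv_smul
      MeasurableSet.univ exp_deriv_aux exp_injOn_aux]
    rw [Measure.restrict_univ]
    simp only [Function.comp_apply]
    calc (∫ u : ℝ, |(-rexp (-u))| • (((rexp (-u) : ℝ) : ℂ) ^ (s - 1) • myf a (rexp (-u))))
        = ∫ u : ℝ, Set.indicator (Ici 0)
            (fun u : ℝ => Complex.exp (-(s * u)) * (u : ℂ) ^ (a - 1)) u := by
          congr 1; funext u
          rw [abs_neg, abs_of_pos (Real.exp_pos _), key_pointwise]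
      _ = ∫ u : ℝ in Ici 0, Complex.exp (-(s * u)) * (u : ℂ) ^ (a - 1) :=
          integral_indicator measurableSet_Ici
      _ = ∫ u : ℝ in Ioi 0, Complex.exp (-(s * u)) * (u : ℂ) ^ (a - 1) :=
          integral_Ici_eq_integral_Ioi
      _ = ∫ u : ℝ in Ioi 0, (u : ℂ) ^ (a - 1) * Complex.exp (-(s * u)) := by
          congr 1; funext u; ring
      _ = Complex.Gamma a * s ^ (-a) := laplace_gamma ha hs
lemma vert_integrable {a : ℂ} (ha : 1 < a.re) {σ : ℝ} (hσ : 0 < σ) :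
    Integrable (fun y : ℝ => Complex.Gamma a * ((σ : ℂ) + y * I) ^ (-a)) := by
  apply Integrable.const_mul
  set c : ℝ := min σ 1 / 2 with hc
  have hcpos : 0 < c := by positivity
  have hbound : ∀ y : ℝ, ‖((σ : ℂ) + y * I) ^ (-a)‖ ≤
      (Real.exp (π * |a.im|) * c ^ (-a.re)) * (1 + ‖y‖) ^ (-a.re) := by
    intro y
    set z : ℂ := (σ : ℂ) + y * I with hz
    have hzre : z.re = σ := by simp [hz]
    have hzim : z.im = y := by simp [hz]
    have habs : c * (1 + |y|) ≤ ‖z‖ := by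
      have h1 : σ ≤ ‖z‖ := by
        have := (le_abs_self z.re).trans (Complex.abs_re_le_norm z); rwa [hzre] at this
      have h2 : |y| ≤ ‖z‖ := by simpa [hzim] using Complex.abs_im_le_norm z
      have h3 : min σ 1 ≤ σ := min_le_left _ _
      have h4 : min σ 1 * |y| ≤ |y| := by
        nlinarith [abs_nonneg y, min_le_right σ 1]
      calc c * (1 + |y|) = (min σ 1 + min σ 1 * |y|) / 2 := by rw [hc]; ring
        _ ≤ (σ + |y|) / 2 := by linarith
        _ ≤ ‖z‖ := by linarith
    have hzpos : (0:ℝ) < ‖z‖ := lt_of_lt_of_le (by positivity) habs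
    calc ‖z ^ (-a)‖ ≤ ‖z‖ ^ (-a).re / Real.exp (z.arg * (-a).im) :=
          Complex.norm_cpow_le z (-a)
      _ = ‖z‖ ^ (-a.re) * Real.exp (z.arg * a.im) := by
          rw [div_eq_mul_inv, ← Real.exp_neg]
          simp only [neg_re, neg_im]
          ring_nf
      _ ≤ (c * (1 + |y|)) ^ (-a.re) * Real.exp (π * |a.im|) := by
          apply mul_le_mul
          · exact Real.rpow_le_rpow_of_nonpos (by positivity) habs (by linarith)
          · apply Real.exp_le_exp.mpr
            calc z.arg * a.im ≤ |z.arg * a.im| := le_abs_self _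
              _ = |z.arg| * |a.im| := abs_mul _ _
              _ ≤ π * |a.im| := by
                  apply mul_le_mul_of_nonneg_right (Complex.abs_arg_le_pi z) (abs_nonneg _)
          · positivity
          · positivity
      _ = (Real.exp (π * |a.im|) * c ^ (-a.re)) * (1 + ‖y‖) ^ (-a.re) := by
          rw [Real.mul_rpow hcpos.le (by positivity)]
          rw [Real.norm_eq_abs]
          ring
  have hcont : Continuous (fun y : ℝ => ((σ : ℂ) + y * I) ^ (-a)) := by
    apply continuous_iff_continuousAt.mpr
    intro y
    apply (continuousAt_cpow_const ?_).comp (by fun_prop)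
    exact Complex.mem_slitPlane_iff.mpr (Or.inl (by simp [hσ]))
  have hg : Integrable (fun y : ℝ =>
      (Real.exp (π * |a.im|) * c ^ (-a.re)) * (1 + ‖y‖) ^ (-a.re)) := by
    apply Integrable.const_mul
    exact integrable_one_add_norm (E := ℝ) (μ := volume) (r := a.re) (by simpa using ha)
  exact hg.mono' hcont.aestronglyMeasurable (Eventually.of_forall hbound)

lemma myf_continuousAt {a : ℂ} {x : ℝ} (hx0 : 0 < x) (hx1 : x < 1) :
    ContinuousAt (myf a) x := by
  have hg : ContinuousAt (fun t : ℝ => ((- Real.log t : ℝ) : ℂ) ^ (a - 1)) x := by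
    apply ContinuousAt.comp (g := fun w : ℂ => w ^ (a - 1))
    · apply continuousAt_cpow_const
      apply Complex.mem_slitPlane_iff.mpr (Or.inl ?_)
      simp only [ofReal_re]
      linarith [Real.log_neg hx0 hx1]
    · exact Complex.continuous_ofReal.continuousAt.comp (Real.continuousAt_log hx0.ne').neg
  apply hg.congr
  filter_upwards [isOpen_Ioo.mem_nhds (show x ∈ Ioo (0:ℝ) 1 from ⟨hx0, hx1⟩)] with t ht
  exact (Set.indicator_of_mem (Ioo_subset_Ioc_self ht)
    (fun t : ℝ => ((- Real.log t : ℝ) : ℂ) ^ (a - 1))).symm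

theorem I2_term_evaluation (ρ : ℂ) (hρ1 : 0 < ρ.re) (hρ2 : ρ.re < 1)
    (N : ℕ) (hN : 0 < N) (k : ℝ) (hk : 0 < k) :
    (1 / (2 * Real.pi) : ℂ) *
      ∫ t : ℝ, Complex.exp ((N : ℂ) * ((1 / N : ℂ) + t * Complex.I))
        * ((1 / N : ℂ) + t * Complex.I) ^ (-(k : ℂ) - 2 - ρ)
    = (N : ℂ) ^ ((k : ℂ) + 1 + ρ) / Complex.Gamma (ρ + (k : ℂ) + 2) := by
  set a : ℂ := ρ + (k : ℂ) + 2 with ha_def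
  have hare : a.re = ρ.re + k + 2 := by simp [ha_def]
  have ha0 : 0 < a.re := by rw [hare]; linarith
  have ha1 : 1 < a.re := by rw [hare]; linarith
  set σ : ℝ := 1 / (N : ℝ) with hσ_def
  have hσ : 0 < σ := by positivity
  set x : ℝ := rexp (-(N : ℝ)) with hx_def
  have hx : 0 < x := Real.exp_pos _
  have hx1 : x < 1 := by
    rw [hx_def]
    have : -(N:ℝ) < 0 := by
      have : (0:ℝ) < N := by exact_mod_cast hN
      linarith
    calc rexp (-(N:ℝ)) < rexp 0 := Real.exp_lt_exp.mpr this
      _ = 1 := Real.exp_zero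
  have hσc : ((σ : ℝ) : ℂ) = 1 / (N : ℂ) := by rw [hσ_def]; push_cast; ring
  have hconv : MellinConvergent (myf a) σ := (mellin_myf ha0 (by simp [hσ])).1
  have hFf : Complex.VerticalIntegrable (mellin (myf a)) σ := by
    apply (vert_integrable ha1 hσ).congr
    apply Eventually.of_forall
    intro y
    exact ((mellin_myf ha0 (by simp [hσ] : 0 < ((σ:ℝ) + (y:ℝ) * I : ℂ).re)).2).symm
  have hfx : ContinuousAt (myf a) x := myf_continuousAt hx hx1
  have hinv := mellinInv_mellin_eq σ (myf a) hx hconv hFf hfx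
  have hmyfx : myf a x = (N : ℂ) ^ (a - 1) := by
    rw [myf, Set.indicator_of_mem (show x ∈ Ioc (0:ℝ) 1 from ⟨hx, hx1.le⟩)]
    rw [hx_def, Real.log_exp]
    push_cast
    ring_nf
  have hint_eq : ∀ y : ℝ, (x : ℂ) ^ (-((σ:ℝ) + (y:ℝ) * I : ℂ)) • mellin (myf a) ((σ:ℝ) + y * I)
      = Complex.Gamma a * (Complex.exp ((N : ℂ) * ((1 / N : ℂ) + y * Complex.I))
        * ((1 / N : ℂ) + y * Complex.I) ^ (-(k : ℂ) - 2 - ρ)) := by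
    intro y
    rw [(mellin_myf ha0 (by simp [hσ] : 0 < ((σ:ℝ) + (y:ℝ) * I : ℂ).re)).2]
    have hxpow : (x : ℂ) ^ (-((σ:ℝ) + (y:ℝ) * I : ℂ))
        = Complex.exp ((N : ℂ) * ((1 / N : ℂ) + y * Complex.I)) := by
      have hxc : (x : ℂ) = Complex.exp (-(N : ℂ)) := by
        rw [hx_def, ofReal_exp]; push_cast; ring_nf
      rw [hxc, cpow_def_of_ne_zero (Complex.exp_ne_zero _),
        Complex.log_exp (by simp [Real.pi_pos]) (by simp [Real.pi_nonneg])]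
      rw [hσc]
      congr 1
      ring
    have hexpo : -a = -(k : ℂ) - 2 - ρ := by rw [ha_def]; ring
    rw [hxpow, smul_eq_mul, hσc, hexpo]
    ring
  rw [mellinInv] at hinv
  have hinteq : (∫ y : ℝ, (x : ℂ) ^ (-((σ:ℝ) + (y:ℝ) * I : ℂ)) • mellin (myf a) ((σ:ℝ) + y * I))
      = Complex.Gamma a * ∫ y : ℝ, Complex.exp ((N : ℂ) * ((1 / N : ℂ) + y * Complex.I))
        * ((1 / N : ℂ) + y * Complex.I) ^ (-(k : ℂ) - 2 - ρ) := by
    rw [← MeasureTheory.integral_const_mul]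
    exact integral_congr_ae (Eventually.of_forall hint_eq)
  rw [hinteq, hmyfx] at hinv
  have hΓ : Complex.Gamma a ≠ 0 := by
    apply Complex.Gamma_ne_zero
    intro m hm
    have : a.re = (-(m:ℂ)).re := by rw [hm]
    simp only [neg_re, natCast_re] at this
    have hm0 : (0:ℝ) ≤ (m:ℝ) := Nat.cast_nonneg m
    linarith [ha0.trans_eq this]
  have hsm : ((1 : ℝ) / (2 * π)) • (Complex.Gamma a * ∫ y : ℝ,
      Complex.exp ((N : ℂ) * ((1 / N : ℂ) + y * Complex.I))
        * ((1 / N : ℂ) + y * Complex.I) ^ (-(k : ℂ) - 2 - ρ))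
      = (1 / (2 * (π:ℂ))) * (Complex.Gamma a * ∫ y : ℝ,
      Complex.exp ((N : ℂ) * ((1 / N : ℂ) + y * Complex.I))
        * ((1 / N : ℂ) + y * Complex.I) ^ (-(k : ℂ) - 2 - ρ)) := by
    rw [Complex.real_smul]
    push_cast
    ring
  rw [hsm] at hinv
  rw [show ((k : ℂ) + 1 + ρ) = a - 1 by rw [ha_def]; ring]
  rw [eq_div_iff hΓ]
  have : Complex.Gamma (ρ + (k:ℂ) + 2) = Complex.Gamma a := by rw [ha_def]
  linear_combination hinv
end

section
/- For any real γ > 0, real α > 1 and real β ∈ (0,1), ∫_1^∞ exp(-γ arctan(1/u)) u^{-(α+β)} du ≤ C(α) · γ^{1-α-β} · (Γ(α-1) + Γ(α)), where C(α) depends only on α. -/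
open Real MeasureTheory

lemma aux_arctan_half {x : ℝ} (h0 : 0 ≤ x) (h1 : x ≤ 1) : x / 2 ≤ Real.arctan x := by
  have hd : ∀ y : ℝ, HasDerivAt (fun y : ℝ => Real.arctan y - y / 2)
      (1 / (1 + y ^ 2) - 1 / 2) y := fun y =>
    (Real.hasDerivAt_arctan y).sub ((hasDerivAt_id y).div_const 2)
  have key : MonotoneOn (fun y : ℝ => Real.arctan y - y / 2) (Set.Icc 0 1) := by
    apply monotoneOn_of_deriv_nonneg (convex_Icc 0 1)
    · exact (Real.continuous_arctan.sub (continuous_id.div_const 2)).continuousOn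
    · exact fun y _ => ((hd y).differentiableAt).differentiableWithinAt
    · intro y hy
      rw [interior_Icc] at hy
      rw [(hd y).deriv]
      have h2 : 1 + y ^ 2 ≤ 2 := by nlinarith [hy.1.le, hy.2.le]
      have h3 : (0:ℝ) < 1 + y ^ 2 := by positivity
      have : (1:ℝ)/2 ≤ 1 / (1 + y ^ 2) := by
        apply div_le_div_of_nonneg_left (by norm_num) h3 h2
      linarith
  have := key (Set.mem_Icc.mpr ⟨le_refl 0, zero_le_one⟩) (Set.mem_Icc.mpr ⟨h0, h1⟩) h0
  simp only [Real.arctan_zero] at this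
  linarith

theorem integral_bound_gamma (α : ℝ) (hα : 1 < α) :
    ∃ C > 0, ∀ γ : ℝ, 0 < γ → ∀ β : ℝ, 0 < β → β < 1 →
      (∫ u in Set.Ioi (1 : ℝ), Real.exp (-γ * Real.arctan (1 / u)) * u ^ (-(α + β)))
        ≤ C * γ ^ (1 - α - β) * (Real.Gamma (α - 1) + Real.Gamma α) := by
  refine ⟨(2:ℝ) ^ α, by positivity, ?_⟩
  intro γ hγ β hβ0 hβ1
  set s : ℝ := α + β with hs
  have hs1 : 1 < s := by simp [hs]; linarith
  set c : ℝ := γ / 2 with hc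
  have hcpos : 0 < c := by positivity
  -- the comparison function
  set g : ℝ → ℝ := fun u => Real.exp (-(c * u⁻¹)) * u ^ (-s) with hg
  -- integrability of g on Ioi 1
  have hgint : IntegrableOn g (Set.Ioi (1:ℝ)) := by
    have hmono : IntegrableOn (fun u : ℝ => u ^ (-s)) (Set.Ioi (1:ℝ)) :=
      integrableOn_Ioi_rpow_of_lt (by linarith) one_pos
    apply hmono.mono' ((ContinuousOn.aestronglyMeasurable ?_ measurableSet_Ioi))
    · filter_upwards [ae_restrict_mem measurableSet_Ioi] with u hu
      have hu1 : (1:ℝ) < u := hu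
      have h0u : (0:ℝ) < u := by linarith
      have hgu : 0 ≤ g u := by positivity
      rw [Real.norm_of_nonneg hgu]
      have : Real.exp (-(c * u⁻¹)) ≤ 1 := by
        apply Real.exp_le_one_iff.mpr
        have : 0 ≤ c * u⁻¹ := by positivity
        linarith
      calc g u ≤ 1 * u ^ (-s) := by
            apply mul_le_mul_of_nonneg_right this (by positivity)
        _ = u ^ (-s) := one_mul _
    · apply ContinuousOn.mul
      · apply Continuous.comp_continuousOn Real.continuous_exp
        apply ContinuousOn.neg
        exact continuousOn_const.mul (continuousOn_inv₀.mono (by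
          intro x hx; exact ne_of_gt (lt_trans one_pos hx)))
      · intro x hx
        exact (Real.continuousAt_rpow_const x (-s)
          (Or.inl (ne_of_gt (lt_trans one_pos hx)))).continuousWithinAt
  -- Step 1: pointwise comparison
  have step1 : (∫ u in Set.Ioi (1 : ℝ), Real.exp (-γ * Real.arctan (1 / u)) * u ^ (-s))
      ≤ ∫ u in Set.Ioi (1:ℝ), g u := by
    apply integral_mono_of_nonneg
    · filter_upwards [ae_restrict_mem measurableSet_Ioi] with u hu
      have h0u : (0:ℝ) < u := lt_trans one_pos hu
      positivity
    · exact hgint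
    · filter_upwards [ae_restrict_mem measurableSet_Ioi] with u hu
      have hu1 : (1:ℝ) < u := hu
      have h0u : (0:ℝ) < u := by linarith
      have harc : (1/u) / 2 ≤ Real.arctan (1/u) :=
        aux_arctan_half (by positivity) (by rw [div_le_one h0u]; linarith)
      have : -γ * Real.arctan (1/u) ≤ -(c * u⁻¹) := by
        have := mul_le_mul_of_nonneg_left harc hγ.le
        rw [hc, one_div] at *
        linarith
      exact mul_le_mul_of_nonneg_right (Real.exp_le_exp.mpr this) (by positivity)
  -- Step 2: substitution u = c / t
  have himg : (fun t => c / t) '' Set.Ioo 0 c = Set.Ioi (1:ℝ) := by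
    ext u
    constructor
    · rintro ⟨t, ht, rfl⟩
      exact (one_lt_div ht.1).mpr ht.2
    · intro hu
      have hu1 : (1:ℝ) < u := hu
      have h0u : (0:ℝ) < u := by linarith
      refine ⟨c / u, ⟨by positivity, div_lt_self hcpos hu1⟩, ?_⟩
      field_simp
  have hsub : (∫ u in Set.Ioi (1:ℝ), g u)
      = ∫ t in Set.Ioo 0 c, |(-(c / t ^ 2))| • g (c / t) := by
    rw [← himg]
    apply integral_image_eq_integral_abs_deriv_smul measurableSet_Ioo
    · intro t ht
      have ht0 : t ≠ 0 := ne_of_gt ht.1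
      have : HasDerivAt (fun t : ℝ => c / t) (-(c / t ^ 2)) t := by
        simpa [div_eq_mul_inv, mul_comm, neg_mul, mul_neg] using
          ((hasDerivAt_inv ht0).const_mul c)
      exact this.hasDerivWithinAt
    · intro t1 h1 t2 h2 he
      have h1' : t1 ≠ 0 := ne_of_gt h1.1
      have h2' : t2 ≠ 0 := ne_of_gt h2.1
      field_simp at he
      rcases he with he | he
      rfl
  -- simplify the substituted integrand
  have hsimp : ∫ t in Set.Ioo 0 c, |(-(c / t ^ 2))| • g (c / t)
      = c ^ (1 - s) * ∫ t in Set.Ioo 0 c, Real.exp (-t) * t ^ (s - 1 - 1) := by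
    rw [← integral_const_mul]
    apply setIntegral_congr_fun measurableSet_Ioo
    intro t ht
    have ht0 : 0 < t := ht.1
    have htc : t < c := ht.2
    have hct : (0:ℝ) < c / t := by positivity
    have h1 : (c / t)⁻¹ = t / c := by field_simp
    have h2 : c * (t / c) = t := by field_simp
    have h3 : (c / t) ^ (-s) = c ^ (-s) * t ^ s := by
      rw [Real.div_rpow hcpos.le ht0.le, Real.rpow_neg ht0.le, div_eq_mul_inv,
        inv_inv, Real.rpow_neg hcpos.le]
    have habs : |(-(c / t ^ 2))| = c / t ^ 2 := by
      rw [abs_neg, abs_of_pos (by positivity)]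
    simp only [smul_eq_mul, habs, hg, h1, h2, h3]
    have hc1s : c ^ (1 - s) = c * c ^ (-s) := by
      rw [show (1:ℝ) - s = 1 + (-s) by ring, Real.rpow_add hcpos, Real.rpow_one]
    have hts : t ^ (s - 1 - 1) = t ^ s / t ^ 2 := by
      rw [show s - 1 - 1 = s - (2:ℕ) by push_cast; ring, Real.rpow_sub ht0,
        Real.rpow_natCast]
    rw [hc1s, hts]
    ring
  -- Step 3: bound incomplete Gamma by Gamma
  have hs1' : (0:ℝ) < s - 1 := by linarith
  have hGint : IntegrableOn (fun x => Real.exp (-x) * x ^ (s - 1 - 1)) (Set.Ioi (0:ℝ)) :=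
    Real.GammaIntegral_convergent hs1'
  have step3 : (∫ t in Set.Ioo 0 c, Real.exp (-t) * t ^ (s - 1 - 1))
      ≤ Real.Gamma (s - 1) := by
    rw [Real.Gamma_eq_integral hs1']
    apply setIntegral_mono_set hGint
    · filter_upwards [ae_restrict_mem measurableSet_Ioi] with x hx
      have : (0:ℝ) < x := hx
      positivity
    · exact HasSubset.Subset.eventuallyLE Set.Ioo_subset_Ioi_self
  -- Step 4: estimate the constant
  have hcs : c ^ (1 - s) ≤ 2 ^ α * γ ^ (1 - α - β) := by
    have h1 : c ^ (1 - s) = γ ^ (1 - s) * 2 ^ (s - 1) := by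
      rw [hc, Real.div_rpow hγ.le (by norm_num : (0:ℝ) ≤ 2), div_eq_mul_inv,
        ← Real.rpow_neg (by norm_num : (0:ℝ) ≤ 2)]
      ring_nf
    rw [h1, hs]
    have h2 : (2:ℝ) ^ (α + β - 1) ≤ 2 ^ α := by
      apply Real.rpow_le_rpow_of_exponent_le (by norm_num)
      linarith
    have h3 : (0:ℝ) < γ ^ (1 - (α + β)) := Real.rpow_pos_of_pos hγ _
    calc γ ^ (1 - (α + β)) * 2 ^ (α + β - 1) ≤ γ ^ (1 - (α + β)) * 2 ^ α :=
          mul_le_mul_of_nonneg_left h2 h3.le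
      _ = 2 ^ α * γ ^ (1 - α - β) := by rw [show 1 - (α + β) = 1 - α - β by ring]; ring
  have hGbound : Real.Gamma (s - 1) ≤ Real.Gamma (α - 1) + Real.Gamma α := by
    have hmem1 : α - 1 ∈ Set.Ioi (0:ℝ) := by simp; linarith
    have hmem2 : α ∈ Set.Ioi (0:ℝ) := by simp; linarith
    have hcvx := Real.convexOn_Gamma.2 hmem1 hmem2 (by linarith : (0:ℝ) ≤ 1 - β)
      hβ0.le (by ring)
    simp only [smul_eq_mul] at hcvx
    have heq : (1 - β) * (α - 1) + β * α = s - 1 := by rw [hs]; ring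
    rw [heq] at hcvx
    have hg1 : 0 < Real.Gamma (α - 1) := Real.Gamma_pos_of_pos (by linarith)
    have hg2 : 0 < Real.Gamma α := Real.Gamma_pos_of_pos (by linarith)
    nlinarith
  -- assemble
  have hIoo_nonneg : 0 ≤ ∫ t in Set.Ioo 0 c, Real.exp (-t) * t ^ (s - 1 - 1) := by
    apply setIntegral_nonneg measurableSet_Ioo
    intro x hx
    have : (0:ℝ) < x := hx.1
    positivity
  have hGpos : 0 < Real.Gamma (s - 1) := Real.Gamma_pos_of_pos hs1'
  have hc1spos : (0:ℝ) < c ^ (1 - s) := Real.rpow_pos_of_pos hcpos _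
  calc (∫ u in Set.Ioi (1 : ℝ), Real.exp (-γ * Real.arctan (1 / u)) * u ^ (-(α + β)))
      ≤ ∫ u in Set.Ioi (1:ℝ), g u := step1
    _ = c ^ (1 - s) * ∫ t in Set.Ioo 0 c, Real.exp (-t) * t ^ (s - 1 - 1) := by
        rw [hsub, hsimp]
    _ ≤ c ^ (1 - s) * Real.Gamma (s - 1) := mul_le_mul_of_nonneg_left step3 hc1spos.le
    _ ≤ (2 ^ α * γ ^ (1 - α - β)) * (Real.Gamma (α - 1) + Real.Gamma α) := by
        apply mul_le_mul hcs hGbound hGpos.le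
        positivity
    _ = 2 ^ α * γ ^ (1 - α - β) * (Real.Gamma (α - 1) + Real.Gamma α) := by ring
end
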